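/- arXiv:2404.00774 — 2 statements merged into one kernel-verified Lean document; each statement's English description precedes it below -/
import Mathlib

section
/- Let q be uniformly distributed on the unit hypersphere in R^d (d ≥ 2), let r ∈ R^d be a fixed unit vector, and r' ∈ R^d fixed. Decompose r' = r'_∥ + r'_⊥ into components parallel and orthogonal to r. Then the conditional expectation of ⟨q, r'⟩² given ⟨q, r⟩ = cos θ equals cos²θ·‖r'_∥‖² + sin²θ·‖r'_⊥‖²/(d−1). -/
open MeasureTheory
open scoped RealInnerProductSpace

set_option maxHeartbeats 2000000

section Aux

variable {d : ℕ} {r : EuclideanSpace ℝ (Fin d)}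
variable {ν : Measure (EuclideanSpace ℝ (Fin d))} [IsProbabilityMeasure ν]

private lemma refl_inner (K : Submodule ℝ (EuclideanSpace ℝ (Fin d)))
    (u x : EuclideanSpace ℝ (Fin d)) :
    ⟪Submodule.reflection K u, x⟫ = ⟪u, Submodule.reflection K x⟫ := by
  conv_lhs => rw [← Submodule.reflection_reflection K x]
  exact (Submodule.reflection K).inner_map_map u (Submodule.reflection K x)

private lemma integral_comp_isometry
    (hrot : ∀ O : EuclideanSpace ℝ (Fin d) ≃ₗᵢ[ℝ] EuclideanSpace ℝ (Fin d),
      O r = r → Measure.map O ν = ν)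
    (O : EuclideanSpace ℝ (Fin d) ≃ₗᵢ[ℝ] EuclideanSpace ℝ (Fin d)) (hO : O r = r)
    (f : EuclideanSpace ℝ (Fin d) → ℝ) (hf : Continuous f) :
    ∫ u, f (O u) ∂ν = ∫ u, f u ∂ν := by
  have h := integral_map (φ := O) (μ := ν) O.continuous.measurable.aemeasurable
    (f := f) hf.aestronglyMeasurable
  rw [hrot O hO] at h
  exact h.symm

private lemma moment1 (hsupp : ∀ᵐ u ∂ν, ‖u‖ = 1 ∧ ⟪u, r⟫ = 0)
    (hrot : ∀ O : EuclideanSpace ℝ (Fin d) ≃ₗᵢ[ℝ] EuclideanSpace ℝ (Fin d),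
      O r = r → Measure.map O ν = ν)
    (v : EuclideanSpace ℝ (Fin d)) : ∫ u, ⟪u, v⟫ ∂ν = 0 := by
  set O := Submodule.reflection (ℝ ∙ r) with hO
  have hOr : O r = r :=
    Submodule.reflection_mem_subspace_eq_self (Submodule.mem_span_singleton_self r)
  have h1 : ∫ u, ⟪O u, v⟫ ∂ν = ∫ u, ⟪u, v⟫ ∂ν :=
    integral_comp_isometry hrot O hOr _ (continuous_id.inner continuous_const)
  have h2 : ∫ u, ⟪O u, v⟫ ∂ν = ∫ u, -⟪u, v⟫ ∂ν := by
    refine integral_congr_ae ?_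
    filter_upwards [hsupp] with u hu
    have hu2 : u ∈ (ℝ ∙ r)ᗮ := Submodule.mem_orthogonal_singleton_iff_inner_right.2
      (by rw [real_inner_comm]; exact hu.2)
    rw [hO, Submodule.reflection_mem_subspace_orthogonalComplement_eq_neg hu2, inner_neg_left]
  rw [h2, integral_neg] at h1
  linarith

private lemma moment2_eq
    (hrot : ∀ O : EuclideanSpace ℝ (Fin d) ≃ₗᵢ[ℝ] EuclideanSpace ℝ (Fin d),
      O r = r → Measure.map O ν = ν)
    (v w : EuclideanSpace ℝ (Fin d)) (hrv : ⟪v, r⟫ = 0) (hrw : ⟪w, r⟫ = 0)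
    (hnorm : ‖v‖ = ‖w‖) :
    ∫ u, ⟪u, v⟫ ^ 2 ∂ν = ∫ u, ⟪u, w⟫ ^ 2 ∂ν := by
  set K := (ℝ ∙ (v - w))ᗮ with hK
  set O := Submodule.reflection K with hOdef
  have hOr : O r = r := Submodule.reflection_mem_subspace_eq_self
    (Submodule.mem_orthogonal_singleton_iff_inner_right.2
      (by rw [inner_sub_left, hrv, hrw]; ring))
  have h1 : O ((1/2 : ℝ) • (v + w)) = (1/2 : ℝ) • (v + w) :=
    Submodule.reflection_mem_subspace_eq_self (Submodule.smul_mem _ _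
      (Submodule.mem_orthogonal_singleton_iff_inner_right.2 (by
        rw [inner_sub_left, inner_add_right, inner_add_right, real_inner_comm w v,
          real_inner_self_eq_norm_sq, real_inner_self_eq_norm_sq, hnorm]
        ring)))
  have h2 : O ((1/2 : ℝ) • (v - w)) = -((1/2 : ℝ) • (v - w)) := by
    apply Submodule.reflection_mem_subspace_orthogonalComplement_eq_neg
    rw [hK, Submodule.orthogonal_orthogonal]
    exact Submodule.smul_mem _ _ (Submodule.mem_span_singleton_self _)
  have hOv : O v = w := by
    have hv : v = (1/2 : ℝ) • (v + w) + (1/2 : ℝ) • (v - w) := by module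
    rw [hv, map_add, h1, h2]
    module
  calc ∫ u, ⟪u, v⟫ ^ 2 ∂ν = ∫ u, ⟪O u, v⟫ ^ 2 ∂ν :=
        (integral_comp_isometry hrot O hOr _
          ((continuous_id.inner continuous_const).pow 2)).symm
    _ = ∫ u, ⟪u, w⟫ ^ 2 ∂ν := by
        refine integral_congr_ae (Filter.Eventually.of_forall fun u => ?_)
        show ⟪O u, v⟫ ^ 2 = ⟪u, w⟫ ^ 2
        rw [hOdef, refl_inner, ← hOdef, hOv]

private lemma moment_cross
    (hrot : ∀ O : EuclideanSpace ℝ (Fin d) ≃ₗᵢ[ℝ] EuclideanSpace ℝ (Fin d),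
      O r = r → Measure.map O ν = ν)
    (v w : EuclideanSpace ℝ (Fin d)) (hrv : ⟪v, r⟫ = 0) (hvw : ⟪v, w⟫ = 0) :
    ∫ u, ⟪u, v⟫ * ⟪u, w⟫ ∂ν = 0 := by
  set O := Submodule.reflection (ℝ ∙ v)ᗮ with hOdef
  have hOr : O r = r := Submodule.reflection_mem_subspace_eq_self
    (Submodule.mem_orthogonal_singleton_iff_inner_right.2 hrv)
  have hOw : O w = w := Submodule.reflection_mem_subspace_eq_self
    (Submodule.mem_orthogonal_singleton_iff_inner_right.2 hvw)
  have hOv : O v = -v := by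
    apply Submodule.reflection_mem_subspace_orthogonalComplement_eq_neg
    rw [Submodule.orthogonal_orthogonal]
    exact Submodule.mem_span_singleton_self _
  have h1 : ∫ u, ⟪O u, v⟫ * ⟪O u, w⟫ ∂ν = ∫ u, ⟪u, v⟫ * ⟪u, w⟫ ∂ν :=
    integral_comp_isometry hrot O hOr _
      ((continuous_id.inner continuous_const).mul (continuous_id.inner continuous_const))
  have h2 : ∀ u, ⟪O u, v⟫ * ⟪O u, w⟫ = -(⟪u, v⟫ * ⟪u, w⟫) := fun u => by
    rw [hOdef, refl_inner, refl_inner, ← hOdef, hOv, hOw, inner_neg_right]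
    ring
  simp_rw [h2, integral_neg] at h1
  linarith

private lemma integrable_inner_mul (hsupp : ∀ᵐ u ∂ν, ‖u‖ = 1 ∧ ⟪u, r⟫ = 0)
    (v w : EuclideanSpace ℝ (Fin d)) :
    Integrable (fun u => ⟪u, v⟫ * ⟪u, w⟫) ν := by
  refine Integrable.mono' (integrable_const (‖v‖ * ‖w‖))
    (((continuous_id.inner continuous_const).mul
      (continuous_id.inner continuous_const)).aestronglyMeasurable) ?_
  filter_upwards [hsupp] with u hu
  have h1 : |⟪u, v⟫| ≤ ‖v‖ := by
    have := abs_real_inner_le_norm u v; rwa [hu.1, one_mul] at this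
  have h2 : |⟪u, w⟫| ≤ ‖w‖ := by
    have := abs_real_inner_le_norm u w; rwa [hu.1, one_mul] at this
  rw [Real.norm_eq_abs, abs_mul]
  exact mul_le_mul h1 h2 (abs_nonneg _) (norm_nonneg _)

private lemma integrable_inner (hsupp : ∀ᵐ u ∂ν, ‖u‖ = 1 ∧ ⟪u, r⟫ = 0)
    (v : EuclideanSpace ℝ (Fin d)) :
    Integrable (fun u => ⟪u, v⟫) ν := by
  refine Integrable.mono' (integrable_const ‖v‖)
    ((continuous_id.inner continuous_const).aestronglyMeasurable) ?_
  filter_upwards [hsupp] with u hu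
  have := abs_real_inner_le_norm u v
  rw [Real.norm_eq_abs]
  rwa [hu.1, one_mul] at this

private lemma integrable_inner_sq (hsupp : ∀ᵐ u ∂ν, ‖u‖ = 1 ∧ ⟪u, r⟫ = 0)
    (v : EuclideanSpace ℝ (Fin d)) :
    Integrable (fun u => ⟪u, v⟫ ^ 2) ν := by
  have := integrable_inner_mul hsupp v v
  refine this.congr (Filter.Eventually.of_forall fun u => ?_)
  ring

private lemma moment2_val (hd : 2 ≤ d) (hr : ‖r‖ = 1)
    (hsupp : ∀ᵐ u ∂ν, ‖u‖ = 1 ∧ ⟪u, r⟫ = 0)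
    (hrot : ∀ O : EuclideanSpace ℝ (Fin d) ≃ₗᵢ[ℝ] EuclideanSpace ℝ (Fin d),
      O r = r → Measure.map O ν = ν)
    (w : EuclideanSpace ℝ (Fin d)) (hrw : ⟪r, w⟫ = 0) :
    ∫ u, ⟪u, w⟫ ^ 2 ∂ν = ‖w‖ ^ 2 / ((d : ℝ) - 1) := by
  set K := (ℝ ∙ r)ᗮ with hK
  have hwK : w ∈ K := Submodule.mem_orthogonal_singleton_iff_inner_right.2 hrw
  set n := Module.finrank ℝ K with hn
  have hrne : r ≠ 0 := by
    intro h; rw [h, norm_zero] at hr; norm_num at hr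
  have hnd : 1 + n = d := by
    have h2 := Submodule.finrank_add_finrank_orthogonal (𝕜 := ℝ) (ℝ ∙ r)
    rwa [finrank_span_singleton hrne, finrank_euclideanSpace_fin] at h2
  have hndR : (n : ℝ) = (d : ℝ) - 1 := by
    have h : (1 : ℝ) + (n : ℝ) = (d : ℝ) := by exact_mod_cast hnd
    linarith
  have hne : 0 < n := by omega
  set b := stdOrthonormalBasis ℝ K with hb
  set i0 : Fin n := ⟨0, hne⟩ with hi0
  have hbr : ∀ i : Fin n, ⟪((b i : EuclideanSpace ℝ (Fin d))), r⟫ = 0 := fun i => by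
    rw [real_inner_comm]
    exact Submodule.mem_orthogonal_singleton_iff_inner_right.1 (b i).2
  have hbnorm : ∀ i : Fin n, ‖(b i : EuclideanSpace ℝ (Fin d))‖ = 1 := fun i => by
    exact b.orthonormal.1 i
  have hdiag : ∀ i : Fin n,
      ∫ u, ⟪u, (b i : EuclideanSpace ℝ (Fin d))⟫ ^ 2 ∂ν
        = ∫ u, ⟪u, (b i0 : EuclideanSpace ℝ (Fin d))⟫ ^ 2 ∂ν := fun i =>
    moment2_eq hrot _ _ (hbr i) (hbr i0) (by rw [hbnorm, hbnorm])
  have hcross : ∀ i j : Fin n, i ≠ j →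
      ∫ u, ⟪u, (b i : EuclideanSpace ℝ (Fin d))⟫ *
        ⟪u, (b j : EuclideanSpace ℝ (Fin d))⟫ ∂ν = 0 := fun i j hij =>
    moment_cross hrot _ _ (hbr i) (by
      rw [← Submodule.coe_inner]
      simpa using b.orthonormal.2 hij)
  have hsum : ∑ i : Fin n, ∫ u, ⟪u, (b i : EuclideanSpace ℝ (Fin d))⟫ ^ 2 ∂ν = 1 := by
    rw [← integral_finset_sum _ (fun i _ => integrable_inner_sq hsupp _)]
    have heq : ∫ u, ∑ i : Fin n, ⟪u, (b i : EuclideanSpace ℝ (Fin d))⟫ ^ 2 ∂ν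
        = ∫ _u, (1 : ℝ) ∂ν := by
      refine integral_congr_ae ?_
      filter_upwards [hsupp] with u hu
      have huK : u ∈ K := Submodule.mem_orthogonal_singleton_iff_inner_right.2
        (by rw [real_inner_comm]; exact hu.2)
      set u' : K := ⟨u, huK⟩ with hu'
      have key := b.sum_inner_mul_inner u' u'
      calc ∑ i : Fin n, ⟪u, (b i : EuclideanSpace ℝ (Fin d))⟫ ^ 2
          = ∑ i : Fin n, ⟪u', b i⟫ * ⟪b i, u'⟫ := by
            refine Finset.sum_congr rfl fun i _ => ?_
            have h1 : ⟪u, ((b i : ↥K) : EuclideanSpace ℝ (Fin d))⟫ = ⟪u', b i⟫ :=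
              (Submodule.coe_inner K u' (b i)).symm
            rw [h1, real_inner_comm (b i) u', sq]
        _ = ⟪u', u'⟫ := key
        _ = 1 := by
            rw [real_inner_self_eq_norm_sq]
            have : ‖u'‖ = ‖u‖ := rfl
            rw [this, hu.1]; norm_num
    rw [heq]
    simp
  have ht : ∫ u, ⟪u, (b i0 : EuclideanSpace ℝ (Fin d))⟫ ^ 2 ∂ν = 1 / ((d : ℝ) - 1) := by
    have h1 : ∑ _i : Fin n, ∫ u, ⟪u, (b i0 : EuclideanSpace ℝ (Fin d))⟫ ^ 2 ∂ν = 1 := by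
      rw [← hsum]
      exact Finset.sum_congr rfl fun i _ => (hdiag i).symm
    rw [Finset.sum_const, Finset.card_univ, Fintype.card_fin, nsmul_eq_mul] at h1
    have hd1 : (d : ℝ) - 1 ≠ 0 := by
      have : (2 : ℝ) ≤ (d : ℝ) := by exact_mod_cast hd
      linarith
    rw [hndR] at h1
    rw [eq_div_iff hd1]
    linear_combination h1
  -- expand w in the basis
  set c : Fin n → ℝ := fun i => ⟪(b i : EuclideanSpace ℝ (Fin d)), w⟫ with hc
  set w' : K := ⟨w, hwK⟩ with hw'
  have hcw : ∀ i, c i = ⟪b i, w'⟫ := fun i => (Submodule.coe_inner K (b i) w').symm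
  have hw_expand : w = ∑ i, c i • (b i : EuclideanSpace ℝ (Fin d)) := by
    have h := b.sum_repr w'
    have h2 : (↑(∑ i, b.repr w' i • b i) : EuclideanSpace ℝ (Fin d)) = w :=
      congrArg Subtype.val h
    rw [← h2]
    push_cast
    refine Finset.sum_congr rfl fun i _ => ?_
    rw [b.repr_apply_apply, ← hcw]
  have hparseval : ∑ i, c i ^ 2 = ‖w‖ ^ 2 := by
    have key := b.sum_inner_mul_inner w' w'
    have h1 : ∑ i, c i ^ 2 = ⟪w', w'⟫ := by
      rw [← key]
      refine Finset.sum_congr rfl fun i _ => ?_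
      rw [hcw, real_inner_comm (b i) w', sq]
    rw [h1, real_inner_self_eq_norm_sq]
    rfl
  have hinner : ∀ u, ⟪u, w⟫ = ∑ i, c i * ⟪u, (b i : EuclideanSpace ℝ (Fin d))⟫ := by
    intro u
    conv_lhs => rw [hw_expand]
    rw [inner_sum]
    exact Finset.sum_congr rfl fun i _ => real_inner_smul_right _ _ _
  have hint : ∀ i j : Fin n, Integrable (fun u =>
      (c i * ⟪u, (b i : EuclideanSpace ℝ (Fin d))⟫) *
      (c j * ⟪u, (b j : EuclideanSpace ℝ (Fin d))⟫)) ν := by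
    intro i j
    have h := (integrable_inner_mul hsupp (b i : EuclideanSpace ℝ (Fin d))
      (b j : EuclideanSpace ℝ (Fin d))).const_mul (c i * c j)
    refine h.congr (Filter.Eventually.of_forall fun u => ?_)
    ring
  calc ∫ u, ⟪u, w⟫ ^ 2 ∂ν
      = ∫ u, ∑ i, ∑ j, (c i * ⟪u, (b i : EuclideanSpace ℝ (Fin d))⟫) *
          (c j * ⟪u, (b j : EuclideanSpace ℝ (Fin d))⟫) ∂ν := by
        refine integral_congr_ae (Filter.Eventually.of_forall fun u => ?_)
        show ⟪u, w⟫ ^ 2 = ∑ i, ∑ j, (c i * ⟪u, (b i : EuclideanSpace ℝ (Fin d))⟫) *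
          (c j * ⟪u, (b j : EuclideanSpace ℝ (Fin d))⟫)
        rw [hinner u, sq, Finset.sum_mul_sum]
    _ = ∑ i, ∑ j, ∫ u, (c i * ⟪u, (b i : EuclideanSpace ℝ (Fin d))⟫) *
          (c j * ⟪u, (b j : EuclideanSpace ℝ (Fin d))⟫) ∂ν := by
        rw [integral_finset_sum _ (fun i _ => integrable_finset_sum _ (fun j _ => hint i j))]
        exact Finset.sum_congr rfl fun i _ => integral_finset_sum _ (fun j _ => hint i j)
    _ = ∑ i, c i ^ 2 * (1 / ((d : ℝ) - 1)) := by
        refine Finset.sum_congr rfl fun i _ => ?_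
        rw [Finset.sum_eq_single i]
        · have h1 : ∫ u, (c i * ⟪u, (b i : EuclideanSpace ℝ (Fin d))⟫) *
              (c i * ⟪u, (b i : EuclideanSpace ℝ (Fin d))⟫) ∂ν
              = c i ^ 2 * ∫ u, ⟪u, (b i : EuclideanSpace ℝ (Fin d))⟫ ^ 2 ∂ν := by
            rw [← integral_const_mul]
            exact integral_congr_ae (Filter.Eventually.of_forall fun u => by ring)
          rw [h1, hdiag i, ht]
        · intro j _ hji
          have h1 : ∫ u, (c i * ⟪u, (b i : EuclideanSpace ℝ (Fin d))⟫) *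
              (c j * ⟪u, (b j : EuclideanSpace ℝ (Fin d))⟫) ∂ν
              = (c i * c j) * ∫ u, ⟪u, (b i : EuclideanSpace ℝ (Fin d))⟫ *
                  ⟪u, (b j : EuclideanSpace ℝ (Fin d))⟫ ∂ν := by
            rw [← integral_const_mul]
            exact integral_congr_ae (Filter.Eventually.of_forall fun u => by ring)
          rw [h1, hcross i j (Ne.symm hji), mul_zero]
        · intro h; exact absurd (Finset.mem_univ i) h
    _ = ‖w‖ ^ 2 / ((d : ℝ) - 1) := by
        rw [← Finset.sum_mul, hparseval]
        ring

end Aux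

/-- For `q` uniform on the subsphere `{q ∈ S^{d-1} : ⟪q,r⟫ = cos θ}` — modeled as
`q = cos θ • r + sin θ • u` with `u` uniform on the unit sphere of the orthogonal
complement of `r` — the conditional expectation of `⟪q,r'⟫²` equals
`cos²θ ‖r'_∥‖² + sin²θ ‖r'_⊥‖²/(d−1)`. -/
theorem conditional_expectation_inner_sq_sphere
    (d : ℕ) (hd : 2 ≤ d)
    (r r' : EuclideanSpace ℝ (Fin d)) (hr : ‖r‖ = 1) (θ : ℝ)
    (ν : Measure (EuclideanSpace ℝ (Fin d))) [IsProbabilityMeasure ν]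
    (hsupp : ∀ᵐ u ∂ν, ‖u‖ = 1 ∧ ⟪u, r⟫ = 0)
    (hrot : ∀ O : EuclideanSpace ℝ (Fin d) ≃ₗᵢ[ℝ] EuclideanSpace ℝ (Fin d),
      O r = r → Measure.map O ν = ν) :
    ∫ u, ⟪Real.cos θ • r + Real.sin θ • u, r'⟫ ^ 2 ∂ν
      = Real.cos θ ^ 2 * ‖((ℝ ∙ r).orthogonalProjectionOnto r' : EuclideanSpace ℝ (Fin d))‖ ^ 2
        + Real.sin θ ^ 2 *
            ‖r' - ((ℝ ∙ r).orthogonalProjectionOnto r' : EuclideanSpace ℝ (Fin d))‖ ^ 2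
            / ((d : ℝ) - 1) := by
  set a : ℝ := ⟪r, r'⟫ with ha
  have hproj : ((ℝ ∙ r).orthogonalProjectionOnto r' : EuclideanSpace ℝ (Fin d)) = a • r := by
    rw [← Submodule.starProjection_apply, Submodule.starProjection_singleton, hr, ha]
    norm_num
  set w : EuclideanSpace ℝ (Fin d) :=
    r' - ((ℝ ∙ r).orthogonalProjectionOnto r' : EuclideanSpace ℝ (Fin d)) with hw
  have hPnorm : ‖((ℝ ∙ r).orthogonalProjectionOnto r' : EuclideanSpace ℝ (Fin d))‖ ^ 2 = a ^ 2 := by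
    rw [hproj, norm_smul, hr, Real.norm_eq_abs, mul_one, sq_abs]
  have hrw : ⟪r, w⟫ = 0 := by
    rw [hw, inner_sub_right, hproj, real_inner_smul_right, real_inner_self_eq_norm_sq, hr]
    ring
  have key : ∀ᵐ u ∂ν, ⟪Real.cos θ • r + Real.sin θ • u, r'⟫ ^ 2
      = (Real.cos θ ^ 2 * a ^ 2 + (2 * Real.cos θ * a * Real.sin θ) * ⟪u, w⟫)
        + Real.sin θ ^ 2 * ⟪u, w⟫ ^ 2 := by
    filter_upwards [hsupp] with u hu
    have h0 : ⟪u, ((ℝ ∙ r).orthogonalProjectionOnto r' : EuclideanSpace ℝ (Fin d))⟫ = 0 := by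
      rw [hproj, real_inner_smul_right, hu.2, mul_zero]
    have h1 : ⟪u, r'⟫ = ⟪u, w⟫ := by
      rw [hw, inner_sub_right, h0, sub_zero]
    rw [inner_add_left, real_inner_smul_left, real_inner_smul_left, h1, ← ha]
    ring
  rw [integral_congr_ae key]
  have i1 : Integrable (fun u => Real.cos θ ^ 2 * a ^ 2
      + (2 * Real.cos θ * a * Real.sin θ) * ⟪u, w⟫) ν :=
    (integrable_const _).add ((integrable_inner hsupp w).const_mul _)
  have i2 : Integrable (fun u => Real.sin θ ^ 2 * ⟪u, w⟫ ^ 2) ν :=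
    (integrable_inner_sq hsupp w).const_mul _
  rw [integral_add i1 i2,
    integral_add (integrable_const _) ((integrable_inner hsupp w).const_mul _),
    integral_const, integral_const_mul, integral_const_mul,
    moment1 hsupp hrot w, moment2_val hd hr hsupp hrot w hrw]
  simp only [measure_univ, probReal_univ, ENNReal.toReal_one, smul_eq_mul, one_mul, mul_zero, add_zero]
  rw [hPnorm]
  ring
end

section
/- Let q be uniformly distributed on the unit sphere in R^d (d ≥ 2), let r ∈ R^d be a fixed nonzero vector and r' ∈ R^d. For the weight function w(t) = |t|^λ with λ ≥ 0, define L(r', r) = E[ w(⟨q,r⟩/‖r‖) · ⟨q,r'⟩² ]. Then there exists a constant C > 0 depending only on d and λ (not on r or r') such that L(r', r) = C · (‖r'‖² + λ‖proj_r r'‖²). -/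
open MeasureTheory
open scoped RealInnerProductSpace

open Real

/-- The function `t ↦ |t|^lam * t` has derivative `(lam+1) * |t|^lam` everywhere. -/
lemma soar_hasDerivAt_abs_rpow_mul (lam : ℝ) (hlam : 0 ≤ lam) (t : ℝ) :
    HasDerivAt (fun t : ℝ => |t| ^ lam * t) ((lam + 1) * |t| ^ lam) t := by
  rcases lt_trichotomy t 0 with ht | rfl | ht
  · -- t < 0 : locally f s = (-s)^lam * s
    have hev : (fun s : ℝ => (-s) ^ lam * s) =ᶠ[nhds t] fun s : ℝ => |s| ^ lam * s := by
      filter_upwards [Iio_mem_nhds ht] with s hs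
      rw [abs_of_neg hs]
    have h1 : HasDerivAt (fun s : ℝ => (-s) ^ lam) (lam * (-t) ^ (lam - 1) * (-1)) t := by
      have := (Real.hasDerivAt_rpow_const (p := lam) (x := -t) (Or.inl (by linarith))).comp t
        ((hasDerivAt_id t).neg)
      simpa [Function.comp_def] using this
    have h2 : HasDerivAt (fun s : ℝ => (-s) ^ lam * s)
        ((lam * (-t) ^ (lam - 1) * (-1)) * t + (-t) ^ lam * 1) t := h1.mul (hasDerivAt_id t)
    have heq : (lam * (-t) ^ (lam - 1) * (-1)) * t + (-t) ^ lam * 1 = (lam + 1) * |t| ^ lam := by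
      have hpos : (0:ℝ) < -t := by linarith
      have : (-t) ^ (lam - 1) * (-t) = (-t) ^ lam := by
        rw [← Real.rpow_add_one (ne_of_gt hpos)]; ring_nf
      rw [abs_of_neg ht]
      nlinarith [this]
    rw [← heq]
    exact h2.congr_of_eventuallyEq hev.symm
  · -- t = 0
    rcases eq_or_lt_of_le hlam with hlam0 | hlam0
    · -- lam = 0 : f = id
      have : (fun t : ℝ => |t| ^ lam * t) = fun t : ℝ => t := by
        funext s; rw [← hlam0, Real.rpow_zero, one_mul]
      rw [this, ← hlam0]
      simpa using (hasDerivAt_id' (0:ℝ))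
    · have habs : |(0:ℝ)| ^ lam = 0 := by
        simp [Real.zero_rpow (ne_of_gt hlam0)]
      rw [habs, mul_zero]
      rw [hasDerivAt_iff_tendsto_slope]
      have hslope : ∀ s : ℝ, s ≠ 0 → slope (fun t : ℝ => |t| ^ lam * t) 0 s = |s| ^ lam := by
        intro s hs
        rw [slope_def_field]; simp only [mul_zero, sub_zero]; field_simp
      have : Filter.Tendsto (fun s : ℝ => |s| ^ lam) (nhdsWithin 0 {(0:ℝ)}ᶜ) (nhds 0) := by
        have hc : ContinuousAt (fun s : ℝ => |s| ^ lam) 0 := by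
          exact ((Real.continuousAt_rpow_const _ lam (Or.inr hlam)).comp
            continuous_abs.continuousAt)
        have := hc.continuousWithinAt (s := {(0:ℝ)}ᶜ)
        simpa [ContinuousWithinAt, Real.zero_rpow (ne_of_gt hlam0)] using this
      exact this.congr' (by filter_upwards [self_mem_nhdsWithin] with s hs
        using (hslope s hs).symm)
  · have hev : (fun s : ℝ => s ^ lam * s) =ᶠ[nhds t] fun s : ℝ => |s| ^ lam * s := by
      filter_upwards [Ioi_mem_nhds ht] with s hs
      rw [abs_of_pos hs]
    have h1 : HasDerivAt (fun s : ℝ => s ^ lam) (lam * t ^ (lam - 1)) t :=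
      Real.hasDerivAt_rpow_const (Or.inl (ne_of_gt ht))
    have h2 : HasDerivAt (fun s : ℝ => s ^ lam * s)
        ((lam * t ^ (lam - 1)) * t + t ^ lam * 1) t := h1.mul (hasDerivAt_id t)
    have heq : (lam * t ^ (lam - 1)) * t + t ^ lam * 1 = (lam + 1) * |t| ^ lam := by
      have : t ^ (lam - 1) * t = t ^ lam := by
        rw [← Real.rpow_add_one (ne_of_gt ht)]; ring_nf
      rw [abs_of_pos ht]
      nlinarith [this]
    rw [← heq]
    exact h2.congr_of_eventuallyEq hev.symm

lemma soar_abs_rpow_mul_sq (lam : ℝ) (hlam : 0 ≤ lam) (t : ℝ) :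
    |t| ^ lam * t ^ 2 = |t| ^ (lam + 2) := by
  rw [Real.rpow_add' (abs_nonneg t) (by positivity)]
  congr 1
  rw [show ((2:ℝ)) = ((2:ℕ):ℝ) by norm_num, Real.rpow_natCast, sq_abs]


section circ
variable (lam : ℝ)

lemma soar_cont_icos (hlam : 0 ≤ lam) : Continuous (fun θ : ℝ => |Real.cos θ| ^ lam) := by
  apply Continuous.rpow_const (continuous_abs.comp Real.continuous_cos)
  exact fun _ => Or.inr hlam

lemma soar_circle_ibp (hlam : 0 ≤ lam) :
    ∫ θ in (0:ℝ)..(2 * π), |Real.cos θ| ^ (lam + 2)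
      = (lam + 1) * ∫ θ in (0:ℝ)..(2 * π), |Real.cos θ| ^ lam * Real.sin θ ^ 2 := by
  have habs2 : ∀ t : ℝ, |t| ^ lam * t ^ 2 = |t| ^ (lam + 2) := by
    intro t
    rw [Real.rpow_add' (abs_nonneg t) (by positivity)]
    congr 1
    rw [show ((2:ℝ)) = ((2:ℕ):ℝ) by norm_num, Real.rpow_natCast, sq_abs]
  have hderiv : ∀ θ : ℝ, HasDerivAt (fun θ : ℝ => |Real.cos θ| ^ lam * Real.cos θ * Real.sin θ)
      (|Real.cos θ| ^ (lam + 2) - (lam + 1) * (|Real.cos θ| ^ lam * Real.sin θ ^ 2)) θ := by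
    intro θ
    have h1 : HasDerivAt (fun θ : ℝ => |Real.cos θ| ^ lam * Real.cos θ)
        (((lam + 1) * |Real.cos θ| ^ lam) * (-Real.sin θ)) θ :=
      (soar_hasDerivAt_abs_rpow_mul lam hlam (Real.cos θ)).comp θ (Real.hasDerivAt_cos θ)
    have h2 := h1.mul (Real.hasDerivAt_sin θ)
    refine h2.congr_deriv ?_
    rw [← habs2 (Real.cos θ)]
    ring
  have hcont1 : Continuous (fun θ : ℝ => |Real.cos θ| ^ (lam + 2)) :=
    soar_cont_icos (lam + 2) (by linarith) |>.comp continuous_id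
  have hcont2 : Continuous (fun θ : ℝ => |Real.cos θ| ^ lam * Real.sin θ ^ 2) :=
    (soar_cont_icos lam hlam).mul (Real.continuous_sin.pow 2)
  have hint : ∫ θ in (0:ℝ)..(2 * π),
      (|Real.cos θ| ^ (lam + 2) - (lam + 1) * (|Real.cos θ| ^ lam * Real.sin θ ^ 2))
      = (|Real.cos (2*π)| ^ lam * Real.cos (2*π) * Real.sin (2*π))
        - (|Real.cos 0| ^ lam * Real.cos 0 * Real.sin 0) := by
    apply intervalIntegral.integral_eq_sub_of_hasDerivAt (fun θ _ => hderiv θ)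
    exact (hcont1.sub (continuous_const.mul hcont2)).intervalIntegrable _ _
  rw [intervalIntegral.integral_sub (hcont1.intervalIntegrable _ _)
      ((show Continuous fun θ : ℝ =>
        (lam + 1) * (|Real.cos θ| ^ lam * Real.sin θ ^ 2) from
          continuous_const.mul hcont2).intervalIntegrable _ _),
    intervalIntegral.integral_const_mul] at hint
  simp [Real.sin_two_pi] at hint
  linarith [hint]

lemma soar_circle_shift (f : ℝ → ℝ) (hper : Function.Periodic f (2 * π)) (φ : ℝ) :
    ∫ θ in (0:ℝ)..(2 * π), f (θ - φ) = ∫ θ in (0:ℝ)..(2 * π), f θ := by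
  have h1 : ∫ θ in (0:ℝ)..(2 * π), f (θ - φ) = ∫ θ in (-φ)..(2 * π - φ), f θ := by
    simpa using intervalIntegral.integral_comp_sub_right (a := (0:ℝ)) (b := 2*π) f φ
  have h2 := hper.intervalIntegral_add_eq (-φ) 0
  rw [h1]
  rw [show (2 * π - φ) = -φ + 2 * π by ring]
  simpa using h2

lemma soar_angle_decomp (x y : ℝ) :
    ∃ φ : ℝ, ∀ θ : ℝ, x * Real.cos θ + y * Real.sin θ
      = Real.sqrt (x ^ 2 + y ^ 2) * Real.cos (θ - φ) := by
  rcases eq_or_ne (x ^ 2 + y ^ 2) 0 with h0 | h0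
  · have hx : x = 0 := by nlinarith [sq_nonneg x, sq_nonneg y]
    have hy : y = 0 := by nlinarith [sq_nonneg x, sq_nonneg y]
    exact ⟨0, fun θ => by simp [hx, hy, h0]⟩
  · set z : ℂ := ⟨x, y⟩ with hz
    have hzne : z ≠ 0 := by
      intro h
      apply h0
      have hx : x = 0 := congrArg Complex.re h
      have hy : y = 0 := congrArg Complex.im h
      simp [hx, hy]
    have habs : ‖z‖ = Real.sqrt (x ^ 2 + y ^ 2) := by
      rw [Complex.norm_def, Complex.normSq_apply]
      norm_num [hz, sq]
    refine ⟨Complex.arg z, fun θ => ?_⟩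
    have hc : Real.cos (Complex.arg z) = x / ‖z‖ := by
      rw [Complex.cos_arg hzne]
    have hs : Real.sin (Complex.arg z) = y / ‖z‖ := by
      rw [Complex.sin_arg]
    have habsne : ‖z‖ ≠ 0 := by
      simpa using hzne
    rw [Real.cos_sub, ← habs, hc, hs]
    field_simp
end circ
lemma soar_per_A (s : ℝ) : Function.Periodic (fun θ : ℝ => |Real.cos θ| ^ s) (2 * π) :=
  fun θ => by simp [Real.cos_periodic θ]

lemma soar_per_B (s : ℝ) :
    Function.Periodic (fun θ : ℝ => |Real.cos θ| ^ s * Real.sin θ ^ 2) (2 * π) :=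
  fun θ => by simp [Real.cos_periodic θ, Real.sin_periodic θ]

lemma soar_inner_circle_A (lam : ℝ) (hlam : 0 ≤ lam) (x y : ℝ) :
    ∫ θ in (0:ℝ)..(2 * π), |x * Real.cos θ + y * Real.sin θ| ^ (lam + 2)
      = Real.sqrt (x ^ 2 + y ^ 2) ^ (lam + 2)
        * ∫ θ in (0:ℝ)..(2 * π), |Real.cos θ| ^ (lam + 2) := by
  obtain ⟨φ, hφ⟩ := soar_angle_decomp x y
  have hpt : ∀ θ : ℝ, |x * Real.cos θ + y * Real.sin θ| ^ (lam + 2)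
      = Real.sqrt (x ^ 2 + y ^ 2) ^ (lam + 2) * |Real.cos (θ - φ)| ^ (lam + 2) := by
    intro θ
    rw [hφ θ, abs_mul, abs_of_nonneg (Real.sqrt_nonneg _),
      Real.mul_rpow (Real.sqrt_nonneg _) (abs_nonneg _)]
  simp_rw [hpt]
  rw [intervalIntegral.integral_const_mul]
  congr 1
  exact soar_circle_shift _ (soar_per_A (lam + 2)) φ

lemma soar_inner_circle_B (lam : ℝ) (hlam : 0 ≤ lam) (x y : ℝ) :
    ∫ θ in (0:ℝ)..(2 * π), |x * Real.cos θ + y * Real.sin θ| ^ lam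
        * (y * Real.cos θ - x * Real.sin θ) ^ 2
      = Real.sqrt (x ^ 2 + y ^ 2) ^ (lam + 2)
        * ∫ θ in (0:ℝ)..(2 * π), |Real.cos θ| ^ lam * Real.sin θ ^ 2 := by
  obtain ⟨φ, hφ⟩ := soar_angle_decomp x y
  set ρ := Real.sqrt (x ^ 2 + y ^ 2) with hρ
  have hsin : ∀ θ : ℝ, y * Real.cos θ - x * Real.sin θ = -(ρ * Real.sin (θ - φ)) := by
    intro θ
    have := hφ (θ - π / 2)
    rw [Real.cos_sub_pi_div_two, Real.sin_sub_pi_div_two] at this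
    have h2 : θ - π / 2 - φ = θ - φ - π / 2 := by ring
    rw [h2, Real.cos_sub_pi_div_two] at this
    linarith [this]
  have hpt : ∀ θ : ℝ, |x * Real.cos θ + y * Real.sin θ| ^ lam
        * (y * Real.cos θ - x * Real.sin θ) ^ 2
      = ρ ^ (lam + 2) * (|Real.cos (θ - φ)| ^ lam * Real.sin (θ - φ) ^ 2) := by
    intro θ
    rw [hφ θ, hsin θ, abs_mul, abs_of_nonneg (Real.sqrt_nonneg _),
      Real.mul_rpow (Real.sqrt_nonneg _) (abs_nonneg _)]
    have hrr : ρ ^ (lam + 2) = ρ ^ lam * ρ ^ 2 := by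
      rw [Real.rpow_add' (Real.sqrt_nonneg _) (by positivity)]
      congr 1
      rw [show ((2:ℝ)) = ((2:ℕ):ℝ) by norm_num, Real.rpow_natCast]
    rw [hrr]
    ring
  simp_rw [hpt]
  rw [intervalIntegral.integral_const_mul]
  congr 1
  exact soar_circle_shift _ (soar_per_B lam) φ
section rot
variable {F : Type*} [NormedAddCommGroup F] [InnerProductSpace ℝ F]

/-- Rotation by angle `θ` in the plane spanned by `u, w`, as a linear map. -/
noncomputable def soarRotAux (u w : F) (θ : ℝ) : F →ₗ[ℝ] F where
  toFun q := q + ((Real.cos θ - 1) * ⟪u, q⟫ - Real.sin θ * ⟪w, q⟫) • u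
      + (Real.sin θ * ⟪u, q⟫ + (Real.cos θ - 1) * ⟪w, q⟫) • w
  map_add' a b := by
    simp only [inner_add_right]
    module
  map_smul' r a := by
    simp only [real_inner_smul_right, RingHom.id_apply]
    module

variable {u w : F} (hu : ‖u‖ = 1) (hw : ‖w‖ = 1) (huw : ⟪u, w⟫ = 0)

section
include hu hw huw

private lemma soar_iuu : ⟪u, u⟫ = 1 := by
  rw [real_inner_self_eq_norm_sq, hu]; norm_num

private lemma soar_iww : ⟪w, w⟫ = 1 := by
  rw [real_inner_self_eq_norm_sq, hw]; norm_num

lemma soarRotAux_inner_u (θ : ℝ) (q : F) :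
    ⟪u, soarRotAux u w θ q⟫ = Real.cos θ * ⟪u, q⟫ - Real.sin θ * ⟪w, q⟫ := by
  simp only [soarRotAux, LinearMap.coe_mk, AddHom.coe_mk, inner_add_right,
    real_inner_smul_right, soar_iuu hu hw huw, huw]
  ring

lemma soarRotAux_inner_w (θ : ℝ) (q : F) :
    ⟪w, soarRotAux u w θ q⟫ = Real.sin θ * ⟪u, q⟫ + Real.cos θ * ⟪w, q⟫ := by
  have hwu : ⟪w, u⟫ = 0 := by rw [real_inner_comm]; exact huw
  simp only [soarRotAux, LinearMap.coe_mk, AddHom.coe_mk, inner_add_right,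
    real_inner_smul_right, soar_iww hu hw huw, hwu]
  ring

lemma soarRotAux_norm (θ : ℝ) (q : F) : ‖soarRotAux u w θ q‖ = ‖q‖ := by
  have hwu : ⟪w, u⟫ = 0 := by rw [real_inner_comm]; exact huw
  set x := ⟪u, q⟫ with hx
  set y := ⟪w, q⟫ with hy
  set α := (Real.cos θ - 1) * x - Real.sin θ * y with hα
  set β := Real.sin θ * x + (Real.cos θ - 1) * y with hβ
  have hform : soarRotAux u w θ q = q + (α • u + β • w) := by
    simp only [soarRotAux, LinearMap.coe_mk, AddHom.coe_mk]
    abel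
  have hsq : ‖soarRotAux u w θ q‖ ^ 2 = ‖q‖ ^ 2 := by
    rw [hform, norm_add_sq_real]
    have h1 : ‖α • u + β • w‖ ^ 2 = α ^ 2 + β ^ 2 := by
      rw [norm_add_sq_real, real_inner_smul_left, real_inner_smul_right, huw,
        norm_smul, norm_smul, hu, hw]
      simp [mul_pow, sq_abs]
    have h2 : ⟪q, α • u + β • w⟫ = α * x + β * y := by
      rw [inner_add_right, real_inner_smul_right, real_inner_smul_right,
        real_inner_comm u q, real_inner_comm w q]
    rw [h1, h2, hα, hβ]
    linear_combination (x ^ 2 + y ^ 2) * Real.sin_sq_add_cos_sq θ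
  have h := congrArg Real.sqrt hsq
  rwa [Real.sqrt_sq (norm_nonneg _), Real.sqrt_sq (norm_nonneg _)] at h

lemma soarRotAux_comp (θ : ℝ) (q : F) :
    soarRotAux u w θ (soarRotAux u w (-θ) q) = q := by
  have hwu : ⟪w, u⟫ = 0 := by rw [real_inner_comm]; exact huw
  set x := ⟪u, q⟫ with hx
  set y := ⟪w, q⟫ with hy
  have h1 : ⟪u, soarRotAux u w (-θ) q⟫ = Real.cos θ * x + Real.sin θ * y := by
    rw [soarRotAux_inner_u hu hw huw]
    rw [Real.cos_neg, Real.sin_neg, ← hx, ← hy]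
    ring
  have h2 : ⟪w, soarRotAux u w (-θ) q⟫ = -(Real.sin θ) * x + Real.cos θ * y := by
    rw [soarRotAux_inner_w hu hw huw]
    rw [Real.cos_neg, Real.sin_neg, ← hx, ← hy]
  show (soarRotAux u w (-θ) q : F) + _ + _ = q
  rw [h1, h2]
  show (q + ((Real.cos (-θ) - 1) * ⟪u, q⟫ - Real.sin (-θ) * ⟪w, q⟫) • u
      + (Real.sin (-θ) * ⟪u, q⟫ + (Real.cos (-θ) - 1) * ⟪w, q⟫) • w) + _ • u + _ • w = q
  rw [Real.cos_neg, Real.sin_neg, ← hx, ← hy]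
  have hc : Real.sin θ ^ 2 + Real.cos θ ^ 2 = 1 := Real.sin_sq_add_cos_sq θ
  have hcu : ((Real.cos θ - 1) * x - -(Real.sin θ) * y)
      + ((Real.cos θ - 1) * (Real.cos θ * x + Real.sin θ * y)
        - Real.sin θ * (-(Real.sin θ) * x + Real.cos θ * y)) = 0 := by
    linear_combination x * hc
  have hcw : (-(Real.sin θ) * x + (Real.cos θ - 1) * y)
      + (Real.sin θ * (Real.cos θ * x + Real.sin θ * y)
        + (Real.cos θ - 1) * (-(Real.sin θ) * x + Real.cos θ * y)) = 0 := by
    linear_combination y * hc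
  have : ∀ (a b a' b' : ℝ), a + a' = 0 → b + b' = 0 →
      (q + a • u + b • w) + a' • u + b' • w = q := by
    intro a b a' b' ha hb
    have : (q + a • u + b • w) + a' • u + b' • w = q + (a + a') • u + (b + b') • w := by
      module
    rw [this, ha, hb]
    simp
  exact this _ _ _ _ hcu hcw

/-- Rotation by angle `θ` in the plane spanned by the orthonormal pair `u, w`,
as a linear isometry equivalence. -/
noncomputable def soarRot (θ : ℝ) : F ≃ₗᵢ[ℝ] F :=
  LinearIsometryEquiv.ofSurjective ⟨soarRotAux u w θ, soarRotAux_norm hu hw huw θ⟩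
    (fun q => ⟨soarRotAux u w (-θ) q, soarRotAux_comp hu hw huw θ q⟩)

lemma soarRot_inner_u (θ : ℝ) (q : F) :
    ⟪u, soarRot hu hw huw θ q⟫ = Real.cos θ * ⟪u, q⟫ - Real.sin θ * ⟪w, q⟫ :=
  soarRotAux_inner_u hu hw huw θ q

lemma soarRot_inner_w (θ : ℝ) (q : F) :
    ⟪w, soarRot hu hw huw θ q⟫ = Real.sin θ * ⟪u, q⟫ + Real.cos θ * ⟪w, q⟫ :=
  soarRotAux_inner_w hu hw huw θ q

end
end rot
section meas
variable {d : ℕ} {μ : Measure (EuclideanSpace ℝ (Fin d))} [IsProbabilityMeasure μ]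

local notation "E'" => EuclideanSpace ℝ (Fin d)

lemma soar_int_comp (hrot : ∀ O : E' ≃ₗᵢ[ℝ] E', Measure.map O μ = μ)
    (O : E' ≃ₗᵢ[ℝ] E') (g : E' → ℝ) :
    ∫ q, g (O q) ∂μ = ∫ q, g q ∂μ :=
  MeasurePreserving.integral_comp ⟨O.continuous.measurable, hrot O⟩
    O.toHomeomorph.measurableEmbedding g

lemma soar_integrable (hsphere : ∀ᵐ q ∂μ, ‖q‖ = 1)
    (g : E' → ℝ) (hg : Continuous g) (c : ℝ) (hb : ∀ q : E', ‖q‖ = 1 → |g q| ≤ c) :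
    Integrable g μ := by
  refine Integrable.mono' (integrable_const c) hg.aestronglyMeasurable ?_
  filter_upwards [hsphere] with q hq
  rw [Real.norm_eq_abs]
  exact hb q hq

lemma soar_cross_zero (lam : ℝ)
    (hrot : ∀ O : E' ≃ₗᵢ[ℝ] E', Measure.map O μ = μ)
    (u v : E') (huv : ⟪u, v⟫ = 0) :
    ∫ q, |⟪q, u⟫| ^ lam * (⟪q, u⟫ * ⟪q, v⟫) ∂μ = 0 := by
  rcases eq_or_ne v 0 with rfl | hv
  · simp
  · set O : E' ≃ₗᵢ[ℝ] E' := Submodule.reflection (ℝ ∙ v)ᗮ with hO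
    have hOu : O u = u :=
      Submodule.reflection_mem_subspace_eq_self
        (Submodule.mem_orthogonal_singleton_iff_inner_left.mpr huv)
    have hOv : O v = -v := Submodule.reflection_orthogonalComplement_singleton_eq_neg v
    set g : E' → ℝ := fun q => |⟪q, u⟫| ^ lam * (⟪q, u⟫ * ⟪q, v⟫) with hg
    have hneg : ∀ q, g (O q) = -(g q) := by
      intro q
      have h1 : ⟪O q, u⟫ = ⟪q, u⟫ := by
        conv_lhs => rw [← hOu]
        exact O.inner_map_map q u
      have h2 : ⟪O q, v⟫ = -⟪q, v⟫ := by
        have := O.inner_map_map q v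
        rw [hOv, inner_neg_right] at this
        linarith
      simp only [hg, h1, h2]
      ring
    have h := soar_int_comp hrot O g
    rw [funext hneg] at h
    · rw [integral_neg] at h
      linarith
lemma soar_prod_ae_fst (hsphere : ∀ᵐ q ∂μ, ‖q‖ = 1) (ν : Measure ℝ) [IsFiniteMeasure ν] :
    ∀ᵐ p ∂(μ.prod ν), ‖(p : E' × ℝ).1‖ = 1 := by
  rw [Filter.eventually_iff, mem_ae_iff]
  have hnull : μ {q : E' | ¬ ‖q‖ = 1} = 0 := by
    rw [Filter.eventually_iff, mem_ae_iff] at hsphere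
    exact hsphere
  have hsub : {p : E' × ℝ | ‖p.1‖ = 1}ᶜ ⊆
      (toMeasurable μ {q : E' | ¬ ‖q‖ = 1}) ×ˢ (Set.univ : Set ℝ) := by
    intro p hp
    exact ⟨subset_toMeasurable _ _ hp, trivial⟩
  refine measure_mono_null hsub ?_
  rw [Measure.prod_prod, measure_toMeasurable, hnull, zero_mul]

lemma soar_avg (hsphere : ∀ᵐ q ∂μ, ‖q‖ = 1)
    (f : E' → ℝ → ℝ) (hf : Continuous fun p : E' × ℝ => f p.1 p.2)
    (c : ℝ) (hb : ∀ (q : E') (θ : ℝ), ‖q‖ = 1 → |f q θ| ≤ c)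
    (Aval : ℝ) (hA : ∀ θ : ℝ, ∫ q, f q θ ∂μ = Aval) :
    (2 * π) * Aval = ∫ q, (∫ θ in (0:ℝ)..(2 * π), f q θ) ∂μ := by
  set ν : Measure ℝ := volume.restrict (Set.Ioc (0:ℝ) (2 * π)) with hν
  haveI : IsFiniteMeasure ν := by
    constructor
    rw [hν, Measure.restrict_apply_univ, Real.volume_Ioc]
    exact ENNReal.ofReal_lt_top
  have hint : Integrable (fun p : E' × ℝ => f p.1 p.2) (μ.prod ν) := by
    refine Integrable.mono' (integrable_const c) hf.aestronglyMeasurable ?_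
    filter_upwards [soar_prod_ae_fst hsphere ν] with p hp
    rw [Real.norm_eq_abs]
    exact hb p.1 p.2 hp
  have hswap := MeasureTheory.integral_integral_swap (f := fun (q : E') (θ : ℝ) => f q θ) hint
  have hl : ∫ (θ : ℝ), (∫ q, f q θ ∂μ) ∂ν = (2 * π) * Aval := by
    simp only [hA]
    rw [integral_const]
    simp [hν, Real.volume_Ioc, ENNReal.toReal_ofReal Real.two_pi_pos.le, smul_eq_mul, Real.pi_pos.le]
  have hr : ∀ q : E', (∫ θ, f q θ ∂ν) = ∫ θ in (0:ℝ)..(2 * π), f q θ := by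
    intro q
    rw [intervalIntegral.integral_of_le Real.two_pi_pos.le]
  rw [← hl, ← hswap]
  refine integral_congr_ae (Filter.Eventually.of_forall fun q => ?_)
  simp only []
  exact hr q
lemma soar_AB (lam : ℝ) (hlam : 0 ≤ lam)
    (hsphere : ∀ᵐ q ∂μ, ‖q‖ = 1)
    (hrot : ∀ O : E' ≃ₗᵢ[ℝ] E', Measure.map O μ = μ)
    (u w : E') (hu : ‖u‖ = 1) (hw : ‖w‖ = 1) (huw : ⟪u, w⟫ = 0) :
    ∫ q, |⟪q, u⟫| ^ (lam + 2) ∂μ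
      = (lam + 1) * ∫ q, |⟪q, u⟫| ^ lam * ⟪q, w⟫ ^ 2 ∂μ := by
  set A := ∫ q, |⟪q, u⟫| ^ (lam + 2) ∂μ with hA
  set B := ∫ q, |⟪q, u⟫| ^ lam * ⟪q, w⟫ ^ 2 ∂μ with hB
  set IA := ∫ θ in (0:ℝ)..(2 * π), |Real.cos θ| ^ (lam + 2) with hIA
  set KB := ∫ θ in (0:ℝ)..(2 * π), |Real.cos θ| ^ lam * Real.sin θ ^ 2 with hKB
  -- rotation formulas
  have hrotu : ∀ (θ : ℝ) (q : E'), ⟪soarRot hu hw huw θ q, u⟫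
      = Real.cos θ * ⟪q, u⟫ - Real.sin θ * ⟪q, w⟫ := by
    intro θ q
    rw [real_inner_comm, soarRot_inner_u, real_inner_comm u q, real_inner_comm w q]
  have hrotw : ∀ (θ : ℝ) (q : E'), ⟪soarRot hu hw huw θ q, w⟫
      = Real.sin θ * ⟪q, u⟫ + Real.cos θ * ⟪q, w⟫ := by
    intro θ q
    rw [real_inner_comm, soarRot_inner_w, real_inner_comm u q, real_inner_comm w q]
  -- continuity of inner products
  have hcX : Continuous fun q : E' => ⟪q, u⟫ := continuous_id.inner continuous_const
  have hcY : Continuous fun q : E' => ⟪q, w⟫ := continuous_id.inner continuous_const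
  have hcbase : Continuous fun p : E' × ℝ =>
      Real.cos p.2 * ⟪p.1, u⟫ - Real.sin p.2 * ⟪p.1, w⟫ :=
    ((Real.continuous_cos.comp continuous_snd).mul (hcX.comp continuous_fst)).sub
      ((Real.continuous_sin.comp continuous_snd).mul (hcY.comp continuous_fst))
  have hcbase2 : Continuous fun p : E' × ℝ =>
      Real.sin p.2 * ⟪p.1, u⟫ + Real.cos p.2 * ⟪p.1, w⟫ :=
    ((Real.continuous_sin.comp continuous_snd).mul (hcX.comp continuous_fst)).add
      ((Real.continuous_cos.comp continuous_snd).mul (hcY.comp continuous_fst))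
  -- bound on base
  have hbound : ∀ (q : E') (θ : ℝ), ‖q‖ = 1 →
      |Real.cos θ * ⟪q, u⟫ - Real.sin θ * ⟪q, w⟫| ≤ 2 := by
    intro q θ hq
    have h1 : |⟪q, u⟫| ≤ 1 := by
      have := abs_real_inner_le_norm q u
      rwa [hq, hu, one_mul] at this
    have h2 : |⟪q, w⟫| ≤ 1 := by
      have := abs_real_inner_le_norm q w
      rwa [hq, hw, one_mul] at this
    calc |Real.cos θ * ⟪q, u⟫ - Real.sin θ * ⟪q, w⟫|
        ≤ |Real.cos θ * ⟪q, u⟫| + |Real.sin θ * ⟪q, w⟫| := abs_sub _ _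
      _ = |Real.cos θ| * |⟪q, u⟫| + |Real.sin θ| * |⟪q, w⟫| := by rw [abs_mul, abs_mul]
      _ ≤ 1 * 1 + 1 * 1 :=
          add_le_add (mul_le_mul (Real.abs_cos_le_one θ) h1 (abs_nonneg _) (by norm_num))
            (mul_le_mul (Real.abs_sin_le_one θ) h2 (abs_nonneg _) (by norm_num))
      _ = 2 := by norm_num
  have hbound2 : ∀ (q : E') (θ : ℝ), ‖q‖ = 1 →
      |Real.sin θ * ⟪q, u⟫ + Real.cos θ * ⟪q, w⟫| ≤ 2 := by
    intro q θ hq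
    have h1 : |⟪q, u⟫| ≤ 1 := by
      have := abs_real_inner_le_norm q u
      rwa [hq, hu, one_mul] at this
    have h2 : |⟪q, w⟫| ≤ 1 := by
      have := abs_real_inner_le_norm q w
      rwa [hq, hw, one_mul] at this
    calc |Real.sin θ * ⟪q, u⟫ + Real.cos θ * ⟪q, w⟫|
        ≤ |Real.sin θ * ⟪q, u⟫| + |Real.cos θ * ⟪q, w⟫| := abs_add_le _ _
      _ = |Real.sin θ| * |⟪q, u⟫| + |Real.cos θ| * |⟪q, w⟫| := by rw [abs_mul, abs_mul]
      _ ≤ 1 * 1 + 1 * 1 :=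
          add_le_add (mul_le_mul (Real.abs_sin_le_one θ) h1 (abs_nonneg _) (by norm_num))
            (mul_le_mul (Real.abs_cos_le_one θ) h2 (abs_nonneg _) (by norm_num))
      _ = 2 := by norm_num
  -- invariance: the rotated integrals are constant in θ
  have hAθ : ∀ θ : ℝ, ∫ q, |Real.cos θ * ⟪q, u⟫ - Real.sin θ * ⟪q, w⟫| ^ (lam + 2) ∂μ = A := by
    intro θ
    have hcomp := soar_int_comp hrot (soarRot hu hw huw θ) (fun q => |⟪q, u⟫| ^ (lam + 2))
    rw [hA, ← hcomp]
    refine integral_congr_ae (Filter.Eventually.of_forall fun q => ?_)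
    simp only [hrotu θ q]
  have hBθ : ∀ θ : ℝ, ∫ q, |Real.cos θ * ⟪q, u⟫ - Real.sin θ * ⟪q, w⟫| ^ lam
      * (Real.sin θ * ⟪q, u⟫ + Real.cos θ * ⟪q, w⟫) ^ 2 ∂μ = B := by
    intro θ
    have hcomp := soar_int_comp hrot (soarRot hu hw huw θ) (fun q => |⟪q, u⟫| ^ lam * ⟪q, w⟫ ^ 2)
    rw [hB, ← hcomp]
    refine integral_congr_ae (Filter.Eventually.of_forall fun q => ?_)
    simp only [hrotu θ q, hrotw θ q]
  -- Fubini for A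
  have h2A : (2 * π) * A = ∫ q, (∫ θ in (0:ℝ)..(2 * π),
      |Real.cos θ * ⟪q, u⟫ - Real.sin θ * ⟪q, w⟫| ^ (lam + 2)) ∂μ := by
    refine soar_avg hsphere _ ?_ ((2:ℝ) ^ (lam + 2)) ?_ A (fun θ => ?_)
    · exact hcbase.abs.rpow_const (fun p => Or.inr (by linarith))
    · intro q θ hq
      rw [abs_of_nonneg (Real.rpow_nonneg (abs_nonneg _) _)]
      exact Real.rpow_le_rpow (abs_nonneg _) (hbound q θ hq) (by linarith)
    · exact hAθ θ
  have h2B : (2 * π) * B = ∫ q, (∫ θ in (0:ℝ)..(2 * π),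
      |Real.cos θ * ⟪q, u⟫ - Real.sin θ * ⟪q, w⟫| ^ lam
        * (Real.sin θ * ⟪q, u⟫ + Real.cos θ * ⟪q, w⟫) ^ 2) ∂μ := by
    refine soar_avg hsphere _ ?_ ((2:ℝ) ^ lam * 2 ^ 2) ?_ B (fun θ => ?_)
    · exact (hcbase.abs.rpow_const (fun p => Or.inr hlam)).mul (hcbase2.pow 2)
    · intro q θ hq
      have hnn : (0:ℝ) ≤ |Real.cos θ * ⟪q, u⟫ - Real.sin θ * ⟪q, w⟫| ^ lam :=
        Real.rpow_nonneg (abs_nonneg _) _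
      rw [abs_of_nonneg (mul_nonneg hnn (sq_nonneg _))]
      have hf1 : |Real.cos θ * ⟪q, u⟫ - Real.sin θ * ⟪q, w⟫| ^ lam ≤ (2:ℝ) ^ lam :=
        Real.rpow_le_rpow (abs_nonneg _) (hbound q θ hq) hlam
      have hf2 : (Real.sin θ * ⟪q, u⟫ + Real.cos θ * ⟪q, w⟫) ^ 2 ≤ 2 ^ 2 := by
        rw [← sq_abs]
        have := hbound2 q θ hq
        nlinarith [abs_nonneg (Real.sin θ * ⟪q, u⟫ + Real.cos θ * ⟪q, w⟫)]
      exact mul_le_mul hf1 hf2 (sq_nonneg _) (Real.rpow_nonneg (by norm_num) _)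
    · exact hBθ θ
  -- evaluate inner circle integrals
  have hinnerA : ∀ q : E', (∫ θ in (0:ℝ)..(2 * π),
      |Real.cos θ * ⟪q, u⟫ - Real.sin θ * ⟪q, w⟫| ^ (lam + 2))
      = Real.sqrt (⟪q, u⟫ ^ 2 + ⟪q, w⟫ ^ 2) ^ (lam + 2) * IA := by
    intro q
    have h := soar_inner_circle_A lam hlam (⟪q, u⟫) (-⟪q, w⟫)
    simp only [neg_sq] at h
    rw [hIA, ← h]
    refine intervalIntegral.integral_congr (fun θ _ => ?_)
    congr 1
    ring
  have hinnerB : ∀ q : E', (∫ θ in (0:ℝ)..(2 * π),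
      |Real.cos θ * ⟪q, u⟫ - Real.sin θ * ⟪q, w⟫| ^ lam
        * (Real.sin θ * ⟪q, u⟫ + Real.cos θ * ⟪q, w⟫) ^ 2)
      = Real.sqrt (⟪q, u⟫ ^ 2 + ⟪q, w⟫ ^ 2) ^ (lam + 2) * KB := by
    intro q
    have h := soar_inner_circle_B lam hlam (⟪q, u⟫) (-⟪q, w⟫)
    simp only [neg_sq] at h
    rw [hKB, ← h]
    refine intervalIntegral.integral_congr (fun θ _ => ?_)
    have e1 : ⟪q, u⟫ * Real.cos θ + -⟪q, w⟫ * Real.sin θ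
        = Real.cos θ * ⟪q, u⟫ - Real.sin θ * ⟪q, w⟫ := by ring
    have e2 : (-⟪q, w⟫ * Real.cos θ - ⟪q, u⟫ * Real.sin θ) ^ 2
        = (Real.sin θ * ⟪q, u⟫ + Real.cos θ * ⟪q, w⟫) ^ 2 := by ring
    rw [e1, e2]
  have hPA : (2 * π) * A = (∫ q, Real.sqrt (⟪q, u⟫ ^ 2 + ⟪q, w⟫ ^ 2) ^ (lam + 2) ∂μ) * IA := by
    rw [h2A, ← integral_mul_const]
    exact integral_congr_ae (Filter.Eventually.of_forall fun q => hinnerA q)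
  have hPB : (2 * π) * B = (∫ q, Real.sqrt (⟪q, u⟫ ^ 2 + ⟪q, w⟫ ^ 2) ^ (lam + 2) ∂μ) * KB := by
    rw [h2B, ← integral_mul_const]
    exact integral_congr_ae (Filter.Eventually.of_forall fun q => hinnerB q)
  have hibp : IA = (lam + 1) * KB := soar_circle_ibp lam hlam
  have hfin : (2 * π) * A = (2 * π) * ((lam + 1) * B) := by
    rw [hPA, hibp]
    rw [show (∫ q, Real.sqrt (⟪q, u⟫ ^ 2 + ⟪q, w⟫ ^ 2) ^ (lam + 2) ∂μ) * ((lam + 1) * KB)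
      = (lam + 1) * ((∫ q, Real.sqrt (⟪q, u⟫ ^ 2 + ⟪q, w⟫ ^ 2) ^ (lam + 2) ∂μ) * KB) by ring,
      ← hPB]
    ring
  exact mul_left_cancel₀ (by positivity) hfin
lemma soar_Aconst (lam : ℝ)
    (hrot : ∀ O : E' ≃ₗᵢ[ℝ] E', Measure.map O μ = μ)
    (u u' : E') (hu : ‖u‖ = 1) (hu' : ‖u'‖ = 1) :
    ∫ q, |⟪q, u⟫| ^ (lam + 2) ∂μ = ∫ q, |⟪q, u'⟫| ^ (lam + 2) ∂μ := by
  set O : E' ≃ₗᵢ[ℝ] E' := Submodule.reflection (ℝ ∙ (u - u'))ᗮ with hO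
  have hOu : O u = u' := Submodule.reflection_sub (hu.trans hu'.symm)
  have hcomp := soar_int_comp hrot O (fun q => |⟪q, u'⟫| ^ (lam + 2))
  rw [← hcomp]
  refine integral_congr_ae (Filter.Eventually.of_forall fun q => ?_)
  simp only []
  congr 2
  rw [← hOu, O.inner_map_map]

lemma soar_g1_integrable (lam : ℝ) (hlam : 0 ≤ lam) (hsphere : ∀ᵐ q ∂μ, ‖q‖ = 1)
    (s : ℝ) (hs : 0 ≤ s) (u : E') (hu : ‖u‖ = 1) :
    Integrable (fun q : E' => |⟪q, u⟫| ^ s) μ := by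
  refine soar_integrable hsphere _ ?_ 1 ?_
  · exact (Continuous.abs (continuous_id.inner continuous_const)).rpow_const
      (fun q => Or.inr hs)
  · intro q hq
    rw [abs_of_nonneg (Real.rpow_nonneg (abs_nonneg _) _)]
    refine Real.rpow_le_one (abs_nonneg _) ?_ hs
    have := abs_real_inner_le_norm q u
    rwa [hq, hu, one_mul] at this

lemma soar_Apos (lam : ℝ) (hlam : 0 ≤ lam) (hd : 0 < d)
    (hsphere : ∀ᵐ q ∂μ, ‖q‖ = 1)
    (hrot : ∀ O : E' ≃ₗᵢ[ℝ] E', Measure.map O μ = μ)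
    (u : E') (hu : ‖u‖ = 1) :
    0 < ∫ q, |⟪q, u⟫| ^ (lam + 2) ∂μ := by
  have hnn : 0 ≤ ∫ q, |⟪q, u⟫| ^ (lam + 2) ∂μ :=
    integral_nonneg fun q => Real.rpow_nonneg (abs_nonneg _) _
  rcases hnn.lt_or_eq with h | h
  · exact h
  exfalso
  -- all coordinates vanish a.e.
  have hcoord : ∀ i : Fin d, ∀ᵐ q ∂μ, ⟪q, (EuclideanSpace.single i (1:ℝ))⟫ = 0 := by
    intro i
    have hei : ‖(EuclideanSpace.single i (1:ℝ))‖ = 1 := by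
      rw [EuclideanSpace.norm_single]
      norm_num
    have hzero : ∫ q, |⟪q, (EuclideanSpace.single i (1:ℝ))⟫| ^ (lam + 2) ∂μ = 0 := by
      rw [← soar_Aconst lam hrot u _ hu hei, ← h]
    have hint := soar_g1_integrable lam hlam hsphere (lam + 2) (by linarith) _ hei
    have := (integral_eq_zero_iff_of_nonneg
      (fun q => Real.rpow_nonneg (abs_nonneg _) _) hint).mp hzero
    filter_upwards [this] with q hq
    have : |⟪q, (EuclideanSpace.single i (1:ℝ))⟫| = 0 := by
      by_contra habs
      have hpos : 0 < |⟪q, (EuclideanSpace.single i (1:ℝ))⟫| :=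
        lt_of_le_of_ne (abs_nonneg _) (Ne.symm habs)
      have := Real.rpow_pos_of_pos hpos (lam + 2)
      change |⟪q, (EuclideanSpace.single i (1:ℝ))⟫| ^ (lam + 2) = 0 at hq
      linarith
    exact abs_eq_zero.mp this
  have hall : ∀ᵐ q ∂μ, ∀ i : Fin d, ⟪q, (EuclideanSpace.single i (1:ℝ))⟫ = 0 :=
    (MeasureTheory.ae_all_iff).mpr hcoord
  haveI : (ae μ).NeBot := IsProbabilityMeasure.ae_neBot
  obtain ⟨q, hq1, hq2⟩ := (hsphere.and hall).exists
  have hq0 : q = 0 := by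
    ext i
    have := hq2 i
    rw [EuclideanSpace.inner_single_right] at this
    simpa using this
  rw [hq0] at hq1
  simp at hq1
end meas
/-- SOAR loss (Theorem 3.1): for `q` uniform on the unit sphere in `ℝ^d` and the weight
`w(t) = |t|^λ`, there is a constant `C > 0` depending only on `d` and `λ` such that
`E[w(⟪q,r⟫/‖r‖) ⟪q,r'⟫²] = C (‖r'‖² + λ ‖proj_r r'‖²)` for all `r ≠ 0` and `r'`. -/
theorem soar_loss_formula
    (d : ℕ) (hd : 2 ≤ d) (lam : ℝ) (hlam : 0 ≤ lam)
    (μ : Measure (EuclideanSpace ℝ (Fin d))) [IsProbabilityMeasure μ]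
    (hsphere : ∀ᵐ q ∂μ, ‖q‖ = 1)
    (hrot : ∀ O : EuclideanSpace ℝ (Fin d) ≃ₗᵢ[ℝ] EuclideanSpace ℝ (Fin d),
      Measure.map O μ = μ) :
    ∃ C : ℝ, 0 < C ∧ ∀ (r r' : EuclideanSpace ℝ (Fin d)), r ≠ 0 →
      ∫ q, |⟪q, r⟫ / ‖r‖| ^ lam * ⟪q, r'⟫ ^ 2 ∂μ
        = C * (‖r'‖ ^ 2
            + lam * ‖(Submodule.orthogonalProjectionOnto (ℝ ∙ r) r' : EuclideanSpace ℝ (Fin d))‖ ^ 2) := by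
  have hdpos : 0 < d := by omega
  set e : EuclideanSpace ℝ (Fin d) := EuclideanSpace.single (⟨0, hdpos⟩ : Fin d) (1:ℝ) with he
  have hee : ‖e‖ = 1 := by rw [he, EuclideanSpace.norm_single]; norm_num
  set Ae := ∫ q, |⟪q, e⟫| ^ (lam + 2) ∂μ with hAe
  have hApos : 0 < Ae := soar_Apos lam hlam hdpos hsphere hrot e hee
  have hlam1 : (0:ℝ) < lam + 1 := by linarith
  refine ⟨Ae / (lam + 1), div_pos hApos hlam1, ?_⟩
  intro r r' hr
  have hrn : ‖r‖ ≠ 0 := norm_ne_zero_iff.mpr hr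
  set u : EuclideanSpace ℝ (Fin d) := ‖r‖⁻¹ • r with hu'
  have hu : ‖u‖ = 1 := norm_smul_inv_norm hr
  have hiuu : ⟪u, u⟫ = 1 := by rw [real_inner_self_eq_norm_sq, hu]; norm_num
  have hqr : ∀ q : EuclideanSpace ℝ (Fin d), ⟪q, r⟫ / ‖r‖ = ⟪q, u⟫ := by
    intro q
    rw [hu', real_inner_smul_right, div_eq_inv_mul]
  set a : ℝ := ⟪u, r'⟫ with ha
  set v : EuclideanSpace ℝ (Fin d) := r' - a • u with hv
  have huv : ⟪u, v⟫ = 0 := by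
    rw [hv, inner_sub_right, real_inner_smul_right, hiuu]
    ring
  have hr' : r' = a • u + v := by rw [hv]; abel
  have hnorm : ‖r'‖ ^ 2 = a ^ 2 + ‖v‖ ^ 2 := by
    rw [hr', norm_add_sq_real, real_inner_smul_left, huv, norm_smul, hu]
    simp [mul_pow, sq_abs]
  have hproj : ‖(Submodule.orthogonalProjectionOnto (ℝ ∙ r) r' : EuclideanSpace ℝ (Fin d))‖ ^ 2 = a ^ 2 := by
    rw [Submodule.coe_orthogonalProjectionOnto_apply, Submodule.starProjection_singleton, norm_smul]
    have haa : a = ‖r‖⁻¹ * ⟪r, r'⟫ := by rw [ha, hu', real_inner_smul_left]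
    rw [haa]
    rw [Real.norm_eq_abs, mul_pow, sq_abs]
    field_simp
    rw [RCLike.ofReal_real_eq_id, id]
    ring
  have hdecomp : ∀ q : EuclideanSpace ℝ (Fin d), ⟪q, r'⟫ = a * ⟪q, u⟫ + ⟪q, v⟫ := by
    intro q
    rw [hr', inner_add_right, real_inner_smul_right]
  -- the three integrands
  have hint1 := soar_g1_integrable lam hlam hsphere (lam + 2) (by linarith) u hu
  have hint2 : Integrable (fun q : EuclideanSpace ℝ (Fin d)
      => |⟪q, u⟫| ^ lam * (⟪q, u⟫ * ⟪q, v⟫)) μ := by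
    refine soar_integrable hsphere _ ?_ ‖v‖ ?_
    · exact ((Continuous.abs (continuous_id.inner continuous_const)).rpow_const
        (fun q => Or.inr hlam)).mul
        ((continuous_id.inner continuous_const).mul (continuous_id.inner continuous_const))
    · intro q hq
      have h1 : |⟪q, u⟫| ≤ 1 := by
        have := abs_real_inner_le_norm q u
        rwa [hq, hu, one_mul] at this
      have h2 : |⟪q, v⟫| ≤ ‖v‖ := by
        have := abs_real_inner_le_norm q v
        rwa [hq, one_mul] at this
      have h3 : |⟪q, u⟫| ^ lam ≤ 1 := Real.rpow_le_one (abs_nonneg _) h1 hlam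
      calc |(|⟪q, u⟫| ^ lam * (⟪q, u⟫ * ⟪q, v⟫))|
          = |⟪q, u⟫| ^ lam * (|⟪q, u⟫| * |⟪q, v⟫|) := by
            rw [abs_mul, abs_mul, abs_of_nonneg (Real.rpow_nonneg (abs_nonneg _) _)]
        _ ≤ 1 * (1 * ‖v‖) := by
            refine mul_le_mul h3 ?_ (mul_nonneg (abs_nonneg _) (abs_nonneg _)) zero_le_one
            exact mul_le_mul h1 h2 (abs_nonneg _) zero_le_one
        _ = ‖v‖ := by ring
  have hint3 : Integrable (fun q : EuclideanSpace ℝ (Fin d)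
      => |⟪q, u⟫| ^ lam * ⟪q, v⟫ ^ 2) μ := by
    refine soar_integrable hsphere _ ?_ (‖v‖ ^ 2) ?_
    · exact ((Continuous.abs (continuous_id.inner continuous_const)).rpow_const
        (fun q => Or.inr hlam)).mul ((continuous_id.inner continuous_const).pow 2)
    · intro q hq
      have h1 : |⟪q, u⟫| ≤ 1 := by
        have := abs_real_inner_le_norm q u
        rwa [hq, hu, one_mul] at this
      have h2 : |⟪q, v⟫| ≤ ‖v‖ := by
        have := abs_real_inner_le_norm q v
        rwa [hq, one_mul] at this
      have h3 : |⟪q, u⟫| ^ lam ≤ 1 := Real.rpow_le_one (abs_nonneg _) h1 hlam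
      have h4 : ⟪q, v⟫ ^ 2 ≤ ‖v‖ ^ 2 := by
        rw [← sq_abs]
        exact pow_le_pow_left₀ (abs_nonneg _) h2 2
      calc |(|⟪q, u⟫| ^ lam * ⟪q, v⟫ ^ 2)|
          = |⟪q, u⟫| ^ lam * ⟪q, v⟫ ^ 2 := by
            rw [abs_of_nonneg (mul_nonneg (Real.rpow_nonneg (abs_nonneg _) _) (sq_nonneg _))]
        _ ≤ 1 * ‖v‖ ^ 2 := mul_le_mul h3 h4 (sq_nonneg _) zero_le_one
        _ = ‖v‖ ^ 2 := by ring
  -- pointwise decomposition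
  have hpt : ∀ q : EuclideanSpace ℝ (Fin d),
      |⟪q, r⟫ / ‖r‖| ^ lam * ⟪q, r'⟫ ^ 2
        = a ^ 2 * (|⟪q, u⟫| ^ (lam + 2))
          + ((2 * a) * (|⟪q, u⟫| ^ lam * (⟪q, u⟫ * ⟪q, v⟫))
            + |⟪q, u⟫| ^ lam * ⟪q, v⟫ ^ 2) := by
    intro q
    rw [hqr q, hdecomp q, ← soar_abs_rpow_mul_sq lam hlam ⟪q, u⟫]
    ring
  have hsplit : ∫ q, |⟪q, r⟫ / ‖r‖| ^ lam * ⟪q, r'⟫ ^ 2 ∂μ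
      = a ^ 2 * (∫ q, |⟪q, u⟫| ^ (lam + 2) ∂μ)
        + ((2 * a) * (∫ q, |⟪q, u⟫| ^ lam * (⟪q, u⟫ * ⟪q, v⟫) ∂μ)
          + ∫ q, |⟪q, u⟫| ^ lam * ⟪q, v⟫ ^ 2 ∂μ) := by
    have hi1 : Integrable (fun q : EuclideanSpace ℝ (Fin d)
        => a ^ 2 * |⟪q, u⟫| ^ (lam + 2)) μ := hint1.const_mul _
    have hi2 : Integrable (fun q : EuclideanSpace ℝ (Fin d)
        => (2 * a) * (|⟪q, u⟫| ^ lam * (⟪q, u⟫ * ⟪q, v⟫))) μ := hint2.const_mul _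
    have hi23 : Integrable (fun q : EuclideanSpace ℝ (Fin d)
        => (2 * a) * (|⟪q, u⟫| ^ lam * (⟪q, u⟫ * ⟪q, v⟫))
          + |⟪q, u⟫| ^ lam * ⟪q, v⟫ ^ 2) μ := hi2.add hint3
    have h0 : ∫ q, |⟪q, r⟫ / ‖r‖| ^ lam * ⟪q, r'⟫ ^ 2 ∂μ
        = ∫ q, (a ^ 2 * |⟪q, u⟫| ^ (lam + 2)
          + ((2 * a) * (|⟪q, u⟫| ^ lam * (⟪q, u⟫ * ⟪q, v⟫))
            + |⟪q, u⟫| ^ lam * ⟪q, v⟫ ^ 2)) ∂μ :=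
      integral_congr_ae (Filter.Eventually.of_forall fun q => hpt q)
    rw [h0, integral_add hi1 hi23, integral_add hi2 hint3,
      integral_const_mul, integral_const_mul]
  have hcross : ∫ q, |⟪q, u⟫| ^ lam * (⟪q, u⟫ * ⟪q, v⟫) ∂μ = 0 :=
    soar_cross_zero lam hrot u v huv
  have hAu : ∫ q, |⟪q, u⟫| ^ (lam + 2) ∂μ = Ae := soar_Aconst lam hrot u e hu hee
  have hT3 : ∫ q, |⟪q, u⟫| ^ lam * ⟪q, v⟫ ^ 2 ∂μ = ‖v‖ ^ 2 * (Ae / (lam + 1)) := by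
    rcases eq_or_ne v 0 with hv0 | hvne
    · rw [hv0]
      simp
    · set w : EuclideanSpace ℝ (Fin d) := ‖v‖⁻¹ • v with hw'
      have hvn : ‖v‖ ≠ 0 := norm_ne_zero_iff.mpr hvne
      have hw : ‖w‖ = 1 := norm_smul_inv_norm hvne
      have huw : ⟪u, w⟫ = 0 := by
        rw [hw', real_inner_smul_right, huv, mul_zero]
      have hvw : v = ‖v‖ • w := by
        rw [hw', smul_smul, mul_inv_cancel₀ hvn, one_smul]
      have hAB := soar_AB lam hlam hsphere hrot u w hu hw huw
      rw [hAu] at hAB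
      have hBval : ∫ q, |⟪q, u⟫| ^ lam * ⟪q, w⟫ ^ 2 ∂μ = Ae / (lam + 1) := by
        field_simp at hAB ⊢
        linarith
      have : ∀ q : EuclideanSpace ℝ (Fin d), |⟪q, u⟫| ^ lam * ⟪q, v⟫ ^ 2
          = ‖v‖ ^ 2 * (|⟪q, u⟫| ^ lam * ⟪q, w⟫ ^ 2) := by
        intro q
        have hqv : ⟪q, v⟫ = ‖v‖ * ⟪q, w⟫ := by
          conv_lhs => rw [hvw]
          rw [real_inner_smul_right]
        rw [hqv]
        ring
      rw [integral_congr_ae (Filter.Eventually.of_forall this), integral_const_mul, hBval]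
  rw [hsplit, hcross, hAu, hT3, hnorm, hproj]
  field_simp
  ring
end
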